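/- arXiv:1601.07583 — 4 statements merged into one kernel-verified Lean document; each statement's English description precedes it below -/
import Mathlib

section
/- For every real number k with k ≥ 2√2 and every real c with 0 ≤ c ≤ 1, one has |k + √(k² - 48c + 64c²)| ≥ 4√c, where √ of a negative real is interpreted via the complex square root (equivalently: if k² - 48c + 64c² ≥ 0 then k + √(k² - 48c + 64c²) ≥ 4√c, and if k² - 48c + 64c² < 0 then |3 - 4c| ≥ 1). -/
theorem stmt_0 (k c : ℝ) (hk : k ≥ 2 * Real.sqrt 2) (hc0 : 0 ≤ c) (hc1 : c ≤ 1) :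
    (k ^ 2 - 48 * c + 64 * c ^ 2 ≥ 0 →
      k + Real.sqrt (k ^ 2 - 48 * c + 64 * c ^ 2) ≥ 4 * Real.sqrt c) ∧
    (k ^ 2 - 48 * c + 64 * c ^ 2 < 0 → |3 - 4 * c| ≥ 1) := by
  have h2 : Real.sqrt 2 ^ 2 = 2 := Real.sq_sqrt (by norm_num)
  have h2n : Real.sqrt 2 ≥ 0 := Real.sqrt_nonneg 2
  have hk8 : k ^ 2 ≥ 8 := by nlinarith
  have hkpos : k > 0 := by nlinarith
  constructor
  · intro hd
    have hs : Real.sqrt (k ^ 2 - 48 * c + 64 * c ^ 2) ^ 2 = k ^ 2 - 48 * c + 64 * c ^ 2 :=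
      Real.sq_sqrt hd
    have hsn : Real.sqrt (k ^ 2 - 48 * c + 64 * c ^ 2) ≥ 0 := Real.sqrt_nonneg _
    have hcs : Real.sqrt c ^ 2 = c := Real.sq_sqrt hc0
    have hcn : Real.sqrt c ≥ 0 := Real.sqrt_nonneg c
    nlinarith [sq_nonneg (1 - 2 * c), mul_nonneg hkpos.le hsn,
      sq_nonneg (k + Real.sqrt (k ^ 2 - 48 * c + 64 * c ^ 2) - 4 * Real.sqrt c),
      sq_nonneg (k + Real.sqrt (k ^ 2 - 48 * c + 64 * c ^ 2) + 4 * Real.sqrt c)]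
  · intro hd
    have hc : c < 1 / 2 := by nlinarith
    rw [abs_of_pos (by linarith)]
    nlinarith
end

section
/- For real k > 3, the substitution v ↦ -4(3v + 4k²)/(v + 12) transforms the integral ∫ from -12 to -k(k-√(k²+16))/2 of dv/√(-(v+12)(v² + k²v - 4k²)) into the integral ∫ from -∞ to -k(k+√(k²+16))/2 of dv/√(-(v+12)(v² + k²v - 4k²)); i.e., these two improper integrals are equal. -/
set_option maxHeartbeats 1000000 in
theorem stmt_12 (k : ℝ) (hk : 3 < k) :
    ∫ v in Set.Ioo (-12 : ℝ) (-k * (k - Real.sqrt (k ^ 2 + 16)) / 2),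
        1 / Real.sqrt (-(v + 12) * (v ^ 2 + k ^ 2 * v - 4 * k ^ 2)) =
    ∫ v in Set.Iio (-k * (k + Real.sqrt (k ^ 2 + 16)) / 2),
        1 / Real.sqrt (-(v + 12) * (v ^ 2 + k ^ 2 * v - 4 * k ^ 2)) := by
  have hs2 : Real.sqrt (k ^ 2 + 16) ^ 2 = k ^ 2 + 16 := Real.sq_sqrt (by positivity)
  set s : ℝ := Real.sqrt (k ^ 2 + 16) with hsdef
  have hs0 : 0 < s := Real.sqrt_pos.mpr (by positivity)
  have hs5 : 5 < s := by nlinarith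
  set r₁ : ℝ := -k * (k + s) / 2 with hr₁
  set r₂ : ℝ := -k * (k - s) / 2 with hr₂
  have hk2 : 9 < k ^ 2 := by nlinarith
  have hsum : r₁ + r₂ = -k ^ 2 := by rw [hr₁, hr₂]; ring
  have hprod : r₁ * r₂ = -4 * k ^ 2 := by
    rw [hr₁, hr₂]; linear_combination (-(k ^ 2) / 4) * hs2
  have hr₁12 : r₁ < -12 := by rw [hr₁]; nlinarith
  have hr₂0 : 0 < r₂ := by rw [hr₂]; nlinarith
  set φ : ℝ → ℝ := fun v => (-12 * v - 16 * k ^ 2) / (v + 12) with hφ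
  set c : ℝ → ℝ := fun v => (16 * k ^ 2 - 144) / (v + 12) ^ 2 with hc
  -- image
  have him : φ '' Set.Ioo (-12 : ℝ) r₂ = Set.Iio r₁ := by
    ext y
    constructor
    · rintro ⟨v, ⟨hv1, hv2⟩, rfl⟩
      have hv12 : 0 < v + 12 := by linarith
      have key : (12 + r₁) * (v - r₂) > 0 :=
        mul_pos_of_neg_of_neg (by linarith) (by linarith)
      have : (-12 * v - 16 * k ^ 2) < r₁ * (v + 12) := by nlinarith
      simp only [hφ, Set.mem_Iio]
      rw [div_lt_iff₀ hv12]
      linarith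
    · intro hy
      have hy12 : y + 12 < 0 := by simp only [Set.mem_Iio] at hy; linarith
      have hyne : y + 12 ≠ 0 := ne_of_lt hy12
      simp only [Set.mem_Iio] at hy
      refine ⟨φ y, ⟨?_, ?_⟩, ?_⟩
      · -- -12 < φ y
        simp only [hφ]
        rw [lt_div_iff_of_neg hy12]
        nlinarith
      · -- φ y < r₂
        simp only [hφ]
        rw [div_lt_iff_of_neg hy12]
        have key : -(12 + r₂) * (y - r₁) > 0 :=
          mul_pos_of_neg_of_neg (by linarith) (by linarith)
        nlinarith
      · -- φ (φ y) = y
        have h2 : φ y + 12 = (144 - 16 * k ^ 2) / (y + 12) := by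
          rw [hφ]; field_simp; ring
        have h2ne : φ y + 12 ≠ 0 := by
          rw [h2]
          exact div_ne_zero (by nlinarith) hyne
        simp only [hφ] at h2ne ⊢
        rw [div_eq_iff h2ne]
        field_simp
        ring
  have hinj : Set.InjOn φ (Set.Ioo (-12 : ℝ) r₂) := by
    intro a ha b hb hab
    have ha12 : a + 12 ≠ 0 := by have := ha.1; intro h; linarith [ha.1]
    have hb12 : b + 12 ≠ 0 := by intro h; linarith [hb.1]
    simp only [hφ] at hab
    field_simp at hab
    have : (16 * k ^ 2 - 144) * (a - b) = 0 := by linarith [hab]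
    have h1 : (16 * k ^ 2 - 144) ≠ 0 := by nlinarith
    have := mul_eq_zero.mp this
    rcases this with h | h
    · exact absurd h h1
    · linarith
  have hderiv : ∀ v ∈ Set.Ioo (-12 : ℝ) r₂,
      HasDerivWithinAt φ (c v) (Set.Ioo (-12 : ℝ) r₂) v := by
    intro v hv
    have hv12 : v + 12 ≠ 0 := by intro h; have := hv.1; linarith
    have h : HasDerivAt φ (c v) v := by
      have h1 : HasDerivAt (fun v : ℝ => -12 * v - 16 * k ^ 2) (-12) v := by
        simpa using ((hasDerivAt_id v).const_mul (-12 : ℝ)).sub_const (16 * k ^ 2)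
      have h2 : HasDerivAt (fun v : ℝ => v + 12) 1 v := by
        simpa using (hasDerivAt_id v).add_const (12 : ℝ)
      have := h1.div h2 hv12
      refine this.congr_deriv ?_
      rw [hc]
      field_simp
      ring
    exact h.hasDerivWithinAt
  rw [← him,
    MeasureTheory.integral_image_eq_integral_abs_deriv_smul measurableSet_Ioo hderiv hinj]
  apply MeasureTheory.setIntegral_congr_fun measurableSet_Ioo
  intro v hv
  have hv12 : 0 < v + 12 := by have := hv.1; linarith
  have hcpos : 0 < c v := by
    rw [hc]; exact div_pos (by nlinarith) (by positivity)
  have hApos : 0 < -(v + 12) * (v ^ 2 + k ^ 2 * v - 4 * k ^ 2) := by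
    have hq : v ^ 2 + k ^ 2 * v - 4 * k ^ 2 < 0 := by
      have h1 : 0 < v - r₁ := by have := hv.1; linarith
      have h2 : v - r₂ < 0 := by linarith [hv.2]
      nlinarith [mul_neg_of_pos_of_neg h1 h2]
    nlinarith
  have hA : -(φ v + 12) * ((φ v) ^ 2 + k ^ 2 * (φ v) - 4 * k ^ 2)
      = (c v) ^ 2 * (-(v + 12) * (v ^ 2 + k ^ 2 * v - 4 * k ^ 2)) := by
    rw [hφ, hc]
    field_simp
    ring
  simp only [smul_eq_mul]
  rw [hA, Real.sqrt_mul (sq_nonneg _), Real.sqrt_sq hcpos.le, abs_of_pos hcpos]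
  have hsA : 0 < Real.sqrt (-(v + 12) * (v ^ 2 + k ^ 2 * v - 4 * k ^ 2)) :=
    Real.sqrt_pos.mpr hApos
  rw [mul_one_div, div_mul_cancel_left₀ hcpos.ne', one_div]
end

section
/- For every positive real k ≠ 3, ∫₀¹ dc/√(c(1-c)(64c² - 48c + k²)) = ∫_{-12}^{-k(k-√(16+k²))/2} dv/√(-(v+12)(v² + k²v - 4k²)). -/
open Set MeasureTheory

noncomputable def gm (k S c : ℝ) : ℝ :=
  -12 + ((k*S - k^2 + 24)/2) * (((k+S)*c - k) / (k + (S-k)*c))^2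

noncomputable def gm' (k S c : ℝ) : ℝ :=
  2*k*S*(k*S - k^2 + 24) * ((k+S)*c - k) / (k + (S-k)*c)^3

lemma gm_hasDerivAt (k S x : ℝ) (hD : k + (S-k)*x ≠ 0) :
    HasDerivAt (gm k S) (gm' k S x) x := by
  have hN : HasDerivAt (fun c : ℝ => (k+S)*c - k) (k+S) x := by
    simpa using ((hasDerivAt_id x).const_mul (k+S)).sub_const k
  have hDd : HasDerivAt (fun c : ℝ => k + (S-k)*c) (S-k) x := by
    simpa using ((hasDerivAt_id x).const_mul (S-k)).const_add k
  have hq : HasDerivAt (fun c : ℝ => ((k+S)*c - k) / (k + (S-k)*c))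
      (((k+S) * (k + (S-k)*x) - ((k+S)*x - k) * (S-k)) / (k + (S-k)*x)^2) x :=
    hN.div hDd hD
  have h2 : HasDerivAt (fun c : ℝ => (((k+S)*c - k) / (k + (S-k)*c))^2)
      (2 * (((k+S)*x - k) / (k + (S-k)*x)) ^ 1 *
        (((k+S) * (k + (S-k)*x) - ((k+S)*x - k) * (S-k)) / (k + (S-k)*x)^2)) x := by
    simpa using hq.fun_pow 2
  have h3 := (h2.const_mul ((k*S - k^2 + 24)/2)).const_add (-12)
  refine h3.congr_deriv ?_
  unfold gm'
  field_simp
  ring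

lemma key_poly (k S x : ℝ) (hS2 : S^2 = 16 + k^2) :
    8*k^2*S^2*(k*S - k^2 + 24)*(x*(1-x)*(64*x^2-48*x+k^2)) +
      (((-24)*(k + (S-k)*x)^2 + (k*S - k^2 + 24)*((k+S)*x - k)^2)^2
        + 2*k^2*(k + (S-k)*x)^2*((-24)*(k + (S-k)*x)^2 + (k*S - k^2 + 24)*((k+S)*x - k)^2)
        - 16*k^2*(k + (S-k)*x)^4) = 0 := by
  linear_combination (k^6 + 4*x*k^5*S - 4*x*k^6 + 6*x^2*k^4*S^2 - 12*x^2*k^5*S + 6*x^2*k^6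
    - 192*x^3*k^2*S^2 - 4*x^3*k^3*S^3 - 4*x^3*k^4*S^2 + 12*x^3*k^5*S - 4*x^3*k^6
    + 192*x^4*k^2*S^2 + x^4*k^2*S^4 + 4*x^4*k^3*S^3 - 2*x^4*k^4*S^2 - 4*x^4*k^5*S
    + x^4*k^6) * hS2

lemma gm_C (k S x : ℝ) (hS2 : S^2 = 16 + k^2) (hD : k + (S-k)*x ≠ 0) :
    -(gm k S x + 12) * ((gm k S x)^2 + k^2*(gm k S x) - 4*k^2)
      = (gm' k S x)^2 * (x*(1-x)*(64*x^2-48*x+k^2)) / 4 := by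
  have h1 : gm k S x + 12
      = (k*S - k^2 + 24) * ((k+S)*x - k)^2 / (2*(k + (S-k)*x)^2) := by
    unfold gm; field_simp <;> ring
  have h2 : (gm k S x)^2 + k^2*(gm k S x) - 4*k^2
      = (((-24)*(k + (S-k)*x)^2 + (k*S - k^2 + 24)*((k+S)*x - k)^2)^2
        + 2*k^2*(k + (S-k)*x)^2*((-24)*(k + (S-k)*x)^2 + (k*S - k^2 + 24)*((k+S)*x - k)^2)
        - 16*k^2*(k + (S-k)*x)^4) / (4*(k + (S-k)*x)^4) := by
    unfold gm; field_simp <;> ring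
  have hM := key_poly k S x hS2
  have h3 : (((-24)*(k + (S-k)*x)^2 + (k*S - k^2 + 24)*((k+S)*x - k)^2)^2
        + 2*k^2*(k + (S-k)*x)^2*((-24)*(k + (S-k)*x)^2 + (k*S - k^2 + 24)*((k+S)*x - k)^2)
        - 16*k^2*(k + (S-k)*x)^4)
      = -(8*k^2*S^2*(k*S - k^2 + 24)*(x*(1-x)*(64*x^2-48*x+k^2))) := by linarith
  rw [h1, h2, h3]
  unfold gm'
  field_simp
  ring

lemma gm_pt (k S x : ℝ) (hk : 0 < k) (hkS : k < S) (hS2 : S^2 = 16 + k^2)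
    (hD : k + (S-k)*x ≠ 0) (hN : (k+S)*x - k ≠ 0) :
    |gm' k S x| * (1 / Real.sqrt (-(gm k S x + 12) * ((gm k S x)^2 + k^2*(gm k S x) - 4*k^2)))
      = 2 * (1 / Real.sqrt (x*(1-x)*(64*x^2-48*x+k^2))) := by
  have hC := gm_C k S x hS2 hD
  have hg'ne : gm' k S x ≠ 0 := by
    unfold gm'
    have ha' : 0 < k*S - k^2 + 24 := by nlinarith
    have hS0 : 0 < S := lt_trans hk hkS
    have h5 : 0 < k*S*(k*S - k^2 + 24) := mul_pos (mul_pos hk hS0) ha'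
    exact div_ne_zero (mul_ne_zero (by nlinarith [h5]) hN) (pow_ne_zero _ hD)
  rcases le_or_gt (x*(1-x)*(64*x^2-48*x+k^2)) 0 with hP | hP
  · have hC0 : -(gm k S x + 12) * ((gm k S x)^2 + k^2*(gm k S x) - 4*k^2) ≤ 0 := by
      rw [hC]; have := sq_nonneg (gm' k S x); nlinarith
    rw [Real.sqrt_eq_zero'.2 hC0, Real.sqrt_eq_zero'.2 hP]
    simp
  · have hg2 : 0 < (gm' k S x)^2 := lt_of_le_of_ne (sq_nonneg _) (Ne.symm (pow_ne_zero 2 hg'ne))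
    have hsP : 0 < Real.sqrt (x*(1-x)*(64*x^2-48*x+k^2)) := Real.sqrt_pos.2 hP
    have habs : 0 < |gm' k S x| := abs_pos.2 hg'ne
    have hCval : -(gm k S x + 12) * ((gm k S x)^2 + k^2*(gm k S x) - 4*k^2)
        = (|gm' k S x| * Real.sqrt (x*(1-x)*(64*x^2-48*x+k^2)) / 2)^2 := by
      rw [hC, div_pow, mul_pow, sq_abs, Real.sq_sqrt hP.le]
      norm_num
    rw [hCval, Real.sqrt_sq (show (0:ℝ) ≤ |gm' k S x| * Real.sqrt (x*(1-x)*(64*x^2-48*x+k^2)) / 2 by positivity)]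
    field_simp

lemma lintegral_image_1d {s : Set ℝ} {f f' : ℝ → ℝ} (hs : MeasurableSet s)
    (hf' : ∀ x ∈ s, HasDerivWithinAt f (f' x) s x) (hf : Set.InjOn f s) (g : ℝ → ENNReal) :
    ∫⁻ x in f '' s, g x = ∫⁻ x in s, ENNReal.ofReal |f' x| * g (f x) := by
  simpa only [ContinuousLinearMap.det_toSpanSingleton] using
    MeasureTheory.lintegral_image_eq_lintegral_abs_det_fderiv_mul volume hs
      (fun x hx => (hf' x hx).hasFDerivWithinAt) hf g

set_option maxHeartbeats 1000000 in
theorem stmt_13 (k : ℝ) (hk : 0 < k) (hk3 : k ≠ 3) :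
    ∫ c in Set.Ioo (0 : ℝ) 1,
        1 / Real.sqrt (c * (1 - c) * (64 * c ^ 2 - 48 * c + k ^ 2)) =
    ∫ v in Set.Ioo (-12 : ℝ) (-k * (k - Real.sqrt (16 + k ^ 2)) / 2),
        1 / Real.sqrt (-(v + 12) * (v ^ 2 + k ^ 2 * v - 4 * k ^ 2)) := by
  have h16 : (0:ℝ) < 16 + k ^ 2 := by positivity
  set S := Real.sqrt (16 + k ^ 2) with hSdef
  have hS2 : S ^ 2 = 16 + k ^ 2 := Real.sq_sqrt h16.le
  have hkS : k < S := by
    calc k = Real.sqrt (k ^ 2) := (Real.sqrt_sq hk.le).symm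
      _ < S := Real.sqrt_lt_sqrt (sq_nonneg k) (by linarith)
  have hS0 : 0 < S := lt_trans hk hkS
  have hkSpos : 0 < k + S := by linarith
  set c₀ : ℝ := k / (k + S) with hc₀def
  have hc₀0 : 0 < c₀ := div_pos hk hkSpos
  have hc₀1 : c₀ < 1 := (div_lt_one hkSpos).2 (by linarith)
  have hkc₀ : (k + S) * c₀ = k := by rw [hc₀def]; field_simp
  have hDpos : ∀ x : ℝ, 0 ≤ x → 0 < k + (S - k) * x := by
    intro x hx
    have : 0 ≤ (S - k) * x := mul_nonneg (by linarith) hx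
    linarith
  have hNneg : ∀ x : ℝ, x < c₀ → (k + S) * x - k < 0 := by
    intro x hx
    have := mul_lt_mul_of_pos_left hx hkSpos
    rw [hkc₀] at this
    linarith
  have hNpos : ∀ x : ℝ, c₀ < x → 0 < (k + S) * x - k := by
    intro x hx
    have := mul_lt_mul_of_pos_left hx hkSpos
    rw [hkc₀] at this
    linarith
  have ha' : 0 < k * S - k ^ 2 + 24 := by nlinarith
  -- continuity
  have hcont1 : ContinuousOn (gm k S) (Set.Icc 0 c₀) := fun x hx =>
    ((gm_hasDerivAt k S x (hDpos x hx.1).ne').continuousAt).continuousWithinAt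
  have hcont2 : ContinuousOn (gm k S) (Set.Icc c₀ 1) := fun x hx =>
    ((gm_hasDerivAt k S x (hDpos x (hc₀0.le.trans hx.1)).ne').continuousAt).continuousWithinAt
  -- endpoint values
  have hg0 : gm k S 0 = -k * (k - S) / 2 := by
    unfold gm
    norm_num
    field_simp
    ring
  have hgc₀ : gm k S c₀ = -12 := by
    unfold gm
    have h0 : (k + S) * c₀ - k = 0 := by rw [hkc₀]; ring
    rw [h0]
    norm_num
  have hg1 : gm k S 1 = -k * (k - S) / 2 := by
    unfold gm
    have e1 : k + (S - k) * 1 = S := by ring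
    have e2 : (k + S) * 1 - k = S := by ring
    rw [e1, e2, div_self hS0.ne']
    norm_num
    linarith
  -- monotonicity
  have hanti : StrictAntiOn (gm k S) (Set.Icc 0 c₀) := by
    apply strictAntiOn_of_deriv_neg (convex_Icc 0 c₀) hcont1
    intro x hx
    rw [interior_Icc] at hx
    have hDx := hDpos x hx.1.le
    rw [(gm_hasDerivAt k S x hDx.ne').deriv]
    unfold gm'
    apply div_neg_of_neg_of_pos
    · have hNx := hNneg x hx.2
      have h5 : 0 < k * S * (k * S - k ^ 2 + 24) := mul_pos (mul_pos hk hS0) ha'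
      nlinarith
    · exact pow_pos hDx 3
  have hmono : StrictMonoOn (gm k S) (Set.Icc c₀ 1) := by
    apply strictMonoOn_of_deriv_pos (convex_Icc c₀ 1) hcont2
    intro x hx
    rw [interior_Icc] at hx
    have hDx := hDpos x (hc₀0.le.trans hx.1.le)
    rw [(gm_hasDerivAt k S x hDx.ne').deriv]
    unfold gm'
    apply div_pos
    · have hNx := hNpos x hx.1
      have h5 : 0 < k * S * (k * S - k ^ 2 + 24) := mul_pos (mul_pos hk hS0) ha'
      nlinarith
    · exact pow_pos hDx 3
  have hinj1 : Set.InjOn (gm k S) (Set.Ioo 0 c₀) := hanti.injOn.mono Set.Ioo_subset_Icc_self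
  have hinj2 : Set.InjOn (gm k S) (Set.Ioo c₀ 1) := hmono.injOn.mono Set.Ioo_subset_Icc_self
  -- images
  have himg1 : gm k S '' Set.Ioo 0 c₀ = Set.Ioo (-12) (-k * (k - S) / 2) := by
    apply Set.Subset.antisymm
    · rintro y ⟨x, hx, rfl⟩
      constructor
      · rw [← hgc₀]
        exact hanti ⟨hx.1.le, hx.2.le⟩ ⟨hc₀0.le, le_refl c₀⟩ hx.2
      · rw [← hg0]
        exact hanti ⟨le_refl 0, hc₀0.le⟩ ⟨hx.1.le, hx.2.le⟩ hx.1
    · have h := intermediate_value_Ioo' hc₀0.le hcont1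
      rw [hgc₀, hg0] at h
      exact h
  have himg2 : gm k S '' Set.Ioo c₀ 1 = Set.Ioo (-12) (-k * (k - S) / 2) := by
    apply Set.Subset.antisymm
    · rintro y ⟨x, hx, rfl⟩
      constructor
      · rw [← hgc₀]
        exact hmono ⟨le_refl c₀, hc₀1.le⟩ ⟨hx.1.le, hx.2.le⟩ hx.1
      · rw [← hg1]
        exact hmono ⟨hx.1.le, hx.2.le⟩ ⟨hc₀1.le, le_refl 1⟩ hx.2
    · have h := intermediate_value_Ioo hc₀1.le hcont2
      rw [hgc₀, hg1] at h
      exact h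
  -- measurability
  have measL : Measurable (fun c : ℝ => 1 / Real.sqrt (c * (1 - c) * (64 * c ^ 2 - 48 * c + k ^ 2))) := by
    have hcnt : Continuous fun c : ℝ => Real.sqrt (c * (1 - c) * (64 * c ^ 2 - 48 * c + k ^ 2)) :=
      Real.continuous_sqrt.comp (by fun_prop)
    simp only [one_div]; exact hcnt.measurable.inv
  have measR : Measurable (fun v : ℝ => 1 / Real.sqrt (-(v + 12) * (v ^ 2 + k ^ 2 * v - 4 * k ^ 2))) := by
    have hcnt : Continuous fun v : ℝ => Real.sqrt (-(v + 12) * (v ^ 2 + k ^ 2 * v - 4 * k ^ 2)) :=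
      Real.continuous_sqrt.comp (by fun_prop)
    simp only [one_div]; exact hcnt.measurable.inv
  -- main lintegral identity
  have main : (∫⁻ c in Set.Ioo (0:ℝ) 1,
        ENNReal.ofReal (1 / Real.sqrt (c * (1 - c) * (64 * c ^ 2 - 48 * c + k ^ 2))))
      = ∫⁻ v in Set.Ioo (-12:ℝ) (-k * (k - S) / 2),
        ENNReal.ofReal (1 / Real.sqrt (-(v + 12) * (v ^ 2 + k ^ 2 * v - 4 * k ^ 2))) := by
    have hmeasfL : Measurable fun c : ℝ =>
        ENNReal.ofReal (1 / Real.sqrt (c * (1 - c) * (64 * c ^ 2 - 48 * c + k ^ 2))) :=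
      ENNReal.measurable_ofReal.comp measL
    have transform : ∀ s : Set ℝ, s ⊆ Set.Ioo 0 1 → (∀ x ∈ s, (k + S) * x - k ≠ 0) →
        Set.InjOn (gm k S) s → MeasurableSet s → gm k S '' s = Set.Ioo (-12) (-k * (k - S) / 2) →
        (∫⁻ v in Set.Ioo (-12:ℝ) (-k * (k - S) / 2),
          ENNReal.ofReal (1 / Real.sqrt (-(v + 12) * (v ^ 2 + k ^ 2 * v - 4 * k ^ 2))))
        = 2 * ∫⁻ c in s,
            ENNReal.ofReal (1 / Real.sqrt (c * (1 - c) * (64 * c ^ 2 - 48 * c + k ^ 2))) := by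
      intro s hs hNs hinj hsm himg
      rw [← himg, lintegral_image_1d hsm
        (fun x hx => (gm_hasDerivAt k S x (hDpos x (hs hx).1.le).ne').hasDerivWithinAt) hinj]
      rw [setLIntegral_congr_fun hsm (fun x hx => ?_)]
      · exact lintegral_const_mul 2 hmeasfL
      · have hD := (hDpos x (hs hx).1.le).ne'
        have hpt := gm_pt k S x hk hkS hS2 hD (hNs x hx)
        rw [← ENNReal.ofReal_mul (abs_nonneg _), hpt,
          ENNReal.ofReal_mul (by norm_num : (0:ℝ) ≤ 2)]
        norm_num
    have hRA := transform (Set.Ioo 0 c₀) (fun x hx => ⟨hx.1, lt_trans hx.2 hc₀1⟩)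
      (fun x hx => (hNneg x hx.2).ne) hinj1 measurableSet_Ioo himg1
    have hRB := transform (Set.Ioo c₀ 1) (fun x hx => ⟨lt_trans hc₀0 hx.1, hx.2⟩)
      (fun x hx => (hNpos x hx.1).ne') hinj2 measurableSet_Ioo himg2
    have hAB : (∫⁻ c in Set.Ioo (0:ℝ) c₀,
          ENNReal.ofReal (1 / Real.sqrt (c * (1 - c) * (64 * c ^ 2 - 48 * c + k ^ 2))))
        = ∫⁻ c in Set.Ioo c₀ 1,
          ENNReal.ofReal (1 / Real.sqrt (c * (1 - c) * (64 * c ^ 2 - 48 * c + k ^ 2))) := by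
      have h2 := hRA.symm.trans hRB
      exact (ENNReal.mul_right_inj (by norm_num) (by norm_num)).1 h2
    have hdisj : Disjoint (Set.Ioc (0:ℝ) c₀) (Set.Ioo c₀ 1) := by
      rw [Set.disjoint_left]
      rintro a ⟨_, h2⟩ ⟨h3, _⟩
      exact absurd h3 (not_lt.2 h2)
    rw [← Set.Ioc_union_Ioo_eq_Ioo hc₀0.le hc₀1,
      lintegral_union measurableSet_Ioo hdisj,
      setLIntegral_congr (MeasureTheory.Ioo_ae_eq_Ioc (μ := volume) (a := (0:ℝ)) (b := c₀)).symm]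
    rw [hAB, ← two_mul, ← hRB]
  -- convert Bochner integrals to lintegrals
  rw [MeasureTheory.integral_eq_lintegral_of_nonneg_ae
      (Filter.Eventually.of_forall (fun c => by positivity)) measL.aestronglyMeasurable,
    MeasureTheory.integral_eq_lintegral_of_nonneg_ae
      (Filter.Eventually.of_forall (fun v => by positivity)) measR.aestronglyMeasurable,
    main]
end

section
/- The complex number x₁ = (3 + i√(5 + 2√13))/(1 + √13) has absolute value 1 and is a root of x⁴ + x³ - x² + x + 1 = 0. -/
theorem stmt_16 :
    let x₁ : ℂ := (3 + Complex.I * Real.sqrt (5 + 2 * Real.sqrt 13)) / (1 + Real.sqrt 13)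
    ‖x₁‖ = 1 ∧ x₁ ^ 4 + x₁ ^ 3 - x₁ ^ 2 + x₁ + 1 = 0 := by
  intro x₁
  have ha : Real.sqrt 13 ^ 2 = 13 := Real.sq_sqrt (by norm_num)
  have ha0 : (0:ℝ) < Real.sqrt 13 := Real.sqrt_pos.mpr (by norm_num)
  have hb : Real.sqrt (5 + 2 * Real.sqrt 13) ^ 2 = 5 + 2 * Real.sqrt 13 :=
    Real.sq_sqrt (by positivity)
  have hb0 : 0 ≤ Real.sqrt (5 + 2 * Real.sqrt 13) := Real.sqrt_nonneg _
  set a : ℝ := Real.sqrt 13 with ha_def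
  set b : ℝ := Real.sqrt (5 + 2 * a) with hb_def
  have hd0 : (1:ℝ) + a ≠ 0 := by positivity
  have hdC : (1 + (a:ℂ)) ≠ 0 := by
    have : ((1 + a : ℝ) : ℂ) ≠ 0 := Complex.ofReal_ne_zero.mpr hd0
    simpa using this
  have hA : (a:ℂ)^2 = 13 := by exact_mod_cast ha
  have hB : (b:ℂ)^2 = 5 + 2*(a:ℂ) := by exact_mod_cast hb
  have hx : x₁ = ((3/(1+a) : ℝ) : ℂ) + ((b/(1+a) : ℝ) : ℂ) * Complex.I := by
    show (3 + Complex.I * b) / (1 + (a:ℂ)) = _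
    push_cast
    field_simp
  constructor
  · rw [hx, Complex.norm_add_mul_I]
    rw [show (3/(1+a))^2 + (b/(1+a))^2 = 1 by
      field_simp
      nlinarith [ha, hb]]
    exact Real.sqrt_one
  · show ((3 + Complex.I * b) / (1 + (a:ℂ)))^4 + ((3 + Complex.I * b) / (1 + (a:ℂ)))^3
      - ((3 + Complex.I * b) / (1 + (a:ℂ)))^2 + ((3 + Complex.I * b) / (1 + (a:ℂ))) + 1 = 0
    have key : ((3:ℂ) + Complex.I * b)^4 + (3 + Complex.I * b)^3 * (1 + a)
        - (3 + Complex.I * b)^2 * (1 + a)^2 + (3 + Complex.I * b) * (1 + a)^3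
        + (1 + a)^4 = 0 := by
      linear_combination ((a:ℂ)^2 + (b:ℂ)^2 + Complex.I*a*b + 7*a - 5*Complex.I*b + 9) * hA
        + ((b:ℂ)^2 - Complex.I*a*b - 13*Complex.I*b - 5*a - 44) * hB
        + (Complex.I^2*(b:ℂ)^4 + Complex.I*a*(b:ℂ)^3 + 13*Complex.I*(b:ℂ)^3
            - (a:ℂ)^2*(b:ℂ)^2 - (b:ℂ)^4 + 7*a*(b:ℂ)^2 + 62*(b:ℂ)^2) * Complex.I_sq
    have step : ∀ n d : ℂ, d ≠ 0 → n^4 + n^3*d - n^2*d^2 + n*d^3 + d^4 = 0 →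
        (n/d)^4 + (n/d)^3 - (n/d)^2 + (n/d) + 1 = 0 := by
      intro n d hd h
      have hdd : d * d⁻¹ = 1 := mul_inv_cancel₀ hd
      simp only [div_eq_mul_inv]
      linear_combination d⁻¹^4 * h - (n^3*d⁻¹^3 - n^2*d⁻¹^2*(d*d⁻¹+1)
        + n*d⁻¹*((d*d⁻¹)^2+d*d⁻¹+1) + ((d*d⁻¹)^3+(d*d⁻¹)^2+d*d⁻¹+1)) * hdd
    exact step _ _ hdC key
end
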